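/- In the glued binary tree GT(r), let v_{i,j} be a vertex in the first tree copy and v'_{i,j} the corresponding vertex (same depth, same position) in the second copy, and let v_a be any quasi-leaf that is a descendant (leaf of the subtree) of v_{i,j}. Then there exists a unique geodesic between v_{i,j} and v'_{i,j} passing through v_a; in particular d(v_{i,j}, v'_{i,j}) = 2(r − i + 1) where i−1 is the common depth. -/

import Mathlib

def MVSet {V : Type*} (G : SimpleGraph V) (S : Set V) : Prop :=
  ∀ x ∈ S, ∀ y ∈ S, ∃ p : G.Walk x y, p.IsPath ∧ p.length = G.dist x y ∧
    ∀ z ∈ p.support, z ≠ x → z ≠ y → z ∉ S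

def MVColoring {V : Type*} {α : Type*} (G : SimpleGraph V) (f : V → α) : Prop :=
  ∀ a : α, MVSet G {v | f v = a}

noncomputable def chiMu {V : Type*} (G : SimpleGraph V) : ℕ :=
  sInf {k : ℕ | ∃ f : V → Fin k, MVColoring G f}

/-- `a` is a child of `b` in the tree of finite sequences. -/
def IsChild {t : ℕ} (a b : List (Fin t)) : Prop := ∃ x : Fin t, a = b ++ [x]

/-- The vertex set of the glued `t`-ary tree `GT(r,t)`: vertices of the first
copy of the perfect `t`-ary tree of depth `r` (including the identified leaves,
the quasi-leaves), together with the internal vertices of the second copy. -/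
def GTVert (r t : ℕ) : Type :=
  {l : List (Fin t) // l.length ≤ r} ⊕ {l : List (Fin t) // l.length < r}

/-- The glued `t`-ary tree `GT(r,t)`: two copies of the perfect `t`-ary tree of
depth `r` with their leaves pairwise identified. -/
def GT (r t : ℕ) : SimpleGraph (GTVert r t) :=
  SimpleGraph.fromRel (fun u v =>
    match u, v with
    | .inl a, .inl b => IsChild a.1 b.1
    | .inr a, .inr b => IsChild a.1 b.1
    | .inl a, .inr b => a.1.length = r ∧ IsChild a.1 b.1
    | .inr _, .inl _ => False)

/-- Quasi-leaves of `GT(r,t)`: the identified leaves of the two copies. -/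
def IsQuasiLeaf {r t : ℕ} (v : GTVert r t) : Prop :=
  match v with
  | .inl a => a.1.length = r
  | .inr _ => False

/-- Vertices in the first copy of the tree, not quasi-leaves. -/
def InCopyOne {r t : ℕ} (v : GTVert r t) : Prop :=
  match v with
  | .inl a => a.1.length < r
  | .inr _ => False

/-- Vertices in the second copy of the tree, not quasi-leaves. -/
def InCopyTwo {r t : ℕ} (v : GTVert r t) : Prop :=
  match v with
  | .inl _ => False
  | .inr _ => True

namespace GTX

variable {r : ℕ}

def f {r t : ℕ} : GTVert r t → ℤ
  | .inl a => a.1.length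
  | .inr a => 2 * r - a.1.length

lemma f_inl {t : ℕ} (a : {l : List (Fin t) // l.length ≤ r}) :
    f (r := r) (Sum.inl a) = a.1.length := rfl

lemma f_inr {t : ℕ} (a : {l : List (Fin t) // l.length < r}) :
    f (r := r) (Sum.inr a : GTVert r t) = 2 * r - a.1.length := rfl

lemma adj_f {u v : GTVert r 2} (h : (GT r 2).Adj u v) :
    f v = f u + 1 ∨ f v = f u - 1 := by
  rw [GT, SimpleGraph.fromRel_adj] at h
  obtain ⟨-, h⟩ := h
  rcases u with a | a <;> rcases v with b | b
  · rcases h with ⟨x, hx⟩ | ⟨x, hx⟩ <;>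
      simp only [f, hx, List.length_append, List.length_singleton] <;> push_cast <;> omega
  · rcases h with ⟨hlen, x, hx⟩ | h
    · simp only [f, hx, List.length_append, List.length_singleton] at hlen ⊢
      push_cast; omega
    · exact h.elim
  · rcases h with h | ⟨hlen, x, hx⟩
    · exact h.elim
    · simp only [f, hx, List.length_append, List.length_singleton] at hlen ⊢
      push_cast; omega
  · rcases h with ⟨x, hx⟩ | ⟨x, hx⟩ <;>
      simp only [f, hx, List.length_append, List.length_singleton] <;> push_cast <;> omega

lemma f_inl_le (a : {l : List (Fin 2) // l.length ≤ r}) :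
    f (r := r) (Sum.inl a) ≤ r := by
  simpa [f] using (by exact_mod_cast a.2 : (a.1.length : ℤ) ≤ r)

lemma f_inr_ge (a : {l : List (Fin 2) // l.length < r}) :
    (r : ℤ) + 1 ≤ f (r := r) (Sum.inr a : GTVert r 2) := by
  have := a.2
  simp only [f]
  omega

/-- Every walk has length at least the `f`-difference of its endpoints. -/
lemma length_ge {u v : GTVert r 2} (p : (GT r 2).Walk u v) :
    f v - f u ≤ p.length ∧ f u - f v ≤ p.length := by
  induction p with
  | nil => simp
  | cons h q ih =>
    rcases adj_f h with h1 | h1 <;>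
      simp only [SimpleGraph.Walk.length_cons] <;> push_cast <;> omega

/-- An ascending walk: each step raises `f` by one. -/
def Asc {u v : GTVert r 2} (p : (GT r 2).Walk u v) : Prop :=
  (p.length : ℤ) = f v - f u

lemma asc_cons {u w v : GTVert r 2} (h : (GT r 2).Adj u w)
    (q : (GT r 2).Walk w v) (ha : Asc (q.cons h)) :
    f w = f u + 1 ∧ Asc q := by
  have hb := length_ge q
  rcases adj_f h with h1 | h1 <;>
    simp only [Asc, SimpleGraph.Walk.length_cons] at ha ⊢ <;> push_cast at ha ⊢ <;> omega

lemma asc_step_inl (a : {l : List (Fin 2) // l.length ≤ r}) (ha : a.1.length = r)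
    {z : GTVert r 2} (h : (GT r 2).Adj (Sum.inl a) z) (hf : f z = f (Sum.inl a) + 1) :
    ∃ b, z = Sum.inr b ∧ b.1 = a.1.dropLast := by
  replace h := (SimpleGraph.fromRel_adj _ _ _).mp h
  obtain ⟨-, h⟩ := h
  rcases z with b | b
  · exfalso
    have h1 : (b.1.length : ℤ) ≤ r := by exact_mod_cast b.2
    simp only [f_inl] at hf
    omega
  · rcases h with ⟨-, x, hx⟩ | h
    · exact ⟨b, rfl, by rw [hx]; simp⟩
    · exact h.elim

lemma asc_step_inr (a : {l : List (Fin 2) // l.length < r})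
    {z : GTVert r 2} (h : (GT r 2).Adj (Sum.inr a : GTVert r 2) z)
    (hf : f z = f (Sum.inr a : GTVert r 2) + 1) :
    ∃ b, z = Sum.inr b ∧ b.1 = a.1.dropLast := by
  replace h := (SimpleGraph.fromRel_adj _ _ _).mp h
  obtain ⟨-, h⟩ := h
  rcases z with b | b
  · exfalso
    rcases h with h | ⟨-, x, hx⟩
    · exact h
    · have h1 : (b.1.length : ℤ) ≤ r := by exact_mod_cast b.2
      have h2 := a.2
      simp only [f_inl, f_inr] at hf
      omega
  · rcases h with ⟨x, hx⟩ | ⟨x, hx⟩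
    · exact ⟨b, rfl, by rw [hx]; simp⟩
    · exfalso
      simp only [f_inr, hx, List.length_append, List.length_singleton] at hf
      push_cast at hf
      omega

lemma desc_step_inl (a : {l : List (Fin 2) // l.length ≤ r})
    {z : GTVert r 2} (h : (GT r 2).Adj (Sum.inl a) z) (hf : f z = f (Sum.inl a) - 1) :
    ∃ b, z = Sum.inl b ∧ b.1 = a.1.dropLast := by
  replace h := (SimpleGraph.fromRel_adj _ _ _).mp h
  obtain ⟨-, h⟩ := h
  rcases z with b | b
  · rcases h with ⟨x, hx⟩ | ⟨x, hx⟩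
    · exact ⟨b, rfl, by rw [hx]; simp⟩
    · exfalso
      simp only [f_inl, hx, List.length_append, List.length_singleton] at hf
      push_cast at hf
      omega
  · exfalso
    have h1 := f_inr_ge b
    have h2 : (a.1.length : ℤ) ≤ r := by exact_mod_cast a.2
    simp only [f_inl] at hf
    omega

lemma asc_unique : ∀ (n : ℕ) (u : GTVert r 2) {v : GTVert r 2}, (r : ℤ) ≤ f u →
    ∀ (q q' : (GT r 2).Walk u v), q.length = n → Asc q → Asc q' → q = q' := by
  intro n
  induction n with
  | zero =>
    intro u v hu q q' hlen ha ha'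
    cases q with
    | cons h p => simp at hlen
    | nil =>
      cases q' with
      | nil => rfl
      | cons h p =>
        exfalso
        simp only [Asc, SimpleGraph.Walk.length_cons, sub_self] at ha'
        push_cast at ha'
        omega
  | succ n ih =>
    intro u v hu q q' hlen ha ha'
    cases q with
    | nil =>
      exfalso; simp at hlen
    | cons h p =>
      cases q' with
      | nil =>
        exfalso
        simp only [Asc, SimpleGraph.Walk.length_nil] at ha'
        simp only [Asc, SimpleGraph.Walk.length_cons, ← ha'] at ha
        push_cast at ha
        omega
      | cons h' p' =>
        obtain ⟨fw, hp⟩ := asc_cons h p ha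
        obtain ⟨fw', hp'⟩ := asc_cons h' p' ha'
        rename_i w w'
        have hww : w' = w := by
          rcases u with a | a
          · have har : a.1.length = r := by
              have h1 : (a.1.length : ℤ) ≤ r := by exact_mod_cast a.2
              have : (a.1.length : ℤ) = r := by simp only [f_inl] at hu; omega
              exact_mod_cast this
            obtain ⟨b, hb, hb1⟩ := asc_step_inl a har h fw
            obtain ⟨b', hb', hb1'⟩ := asc_step_inl a har h' fw'
            rw [hb, hb', Subtype.ext (hb1'.trans hb1.symm)]
          · obtain ⟨b, hb, hb1⟩ := asc_step_inr a h fw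
            obtain ⟨b', hb', hb1'⟩ := asc_step_inr a h' fw'
            rw [hb, hb', Subtype.ext (hb1'.trans hb1.symm)]
        subst hww
        have hu2 : (r : ℤ) ≤ f w' := by omega
        have hlen2 : p.length = n := by
          simpa using hlen
        rw [ih w' hu2 p p' hlen2 hp hp']

/-- A descending walk: each step lowers `f` by one. -/
def Desc {u v : GTVert r 2} (p : (GT r 2).Walk u v) : Prop :=
  (p.length : ℤ) = f u - f v

lemma desc_cons {u w v : GTVert r 2} (h : (GT r 2).Adj u w)
    (q : (GT r 2).Walk w v) (ha : Desc (q.cons h)) :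
    f w = f u - 1 ∧ Desc q := by
  have hb := length_ge q
  rcases adj_f h with h1 | h1 <;>
    simp only [Desc, SimpleGraph.Walk.length_cons] at ha ⊢ <;> push_cast at ha ⊢ <;> omega

lemma desc_unique : ∀ (n : ℕ) (u : GTVert r 2) {v : GTVert r 2},
    (∃ a, u = Sum.inl a) →
    ∀ (q q' : (GT r 2).Walk u v), q.length = n → Desc q → Desc q' → q = q' := by
  intro n
  induction n with
  | zero =>
    intro u v hu q q' hlen ha ha'
    cases q with
    | cons h p => simp at hlen
    | nil =>
      cases q' with
      | nil => rfl
      | cons h p =>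
        exfalso
        simp only [Desc, SimpleGraph.Walk.length_cons, sub_self] at ha'
        push_cast at ha'
        omega
  | succ n ih =>
    intro u v hu q q' hlen ha ha'
    cases q with
    | nil =>
      exfalso; simp at hlen
    | cons h p =>
      cases q' with
      | nil =>
        exfalso
        simp only [Desc, SimpleGraph.Walk.length_nil] at ha'
        simp only [Desc, SimpleGraph.Walk.length_cons, ← ha'] at ha
        push_cast at ha
        omega
      | cons h' p' =>
        obtain ⟨fw, hp⟩ := desc_cons h p ha
        obtain ⟨fw', hp'⟩ := desc_cons h' p' ha'
        rename_i w w'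
        obtain ⟨a, rfl⟩ := hu
        obtain ⟨b, hb, hb1⟩ := desc_step_inl a h fw
        obtain ⟨b', hb', hb1'⟩ := desc_step_inl a h' fw'
        have hww : w' = w := by
          rw [hb, hb', Subtype.ext (hb1'.trans hb1.symm)]
        subst hww
        have hlen2 : p.length = n := by have := SimpleGraph.Walk.length_cons h p; omega
        rw [ih w' ⟨b, hb⟩ p p' hlen2 hp hp']

lemma asc_support_ge {u v : GTVert r 2} (q : (GT r 2).Walk u v) (ha : Asc q) :
    ∀ z ∈ q.support, f u ≤ f z := by
  induction q with
  | nil => intro z hz; simp at hz; subst hz; exact le_rfl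
  | cons h p ih =>
    obtain ⟨fw, hp⟩ := asc_cons h p ha
    intro z hz
    rw [SimpleGraph.Walk.support_cons, List.mem_cons] at hz
    rcases hz with rfl | hz2
    · exact le_rfl
    · have := ih hp z hz2
      omega

lemma asc_isPath {u v : GTVert r 2} (q : (GT r 2).Walk u v) (ha : Asc q) :
    q.IsPath := by
  induction q with
  | nil => exact SimpleGraph.Walk.IsPath.nil
  | cons h p ih =>
    obtain ⟨fw, hp⟩ := asc_cons h p ha
    refine (ih hp).cons ?_
    intro hmem
    have := asc_support_ge p hp _ hmem
    omega

lemma adj_down (a b : {l : List (Fin 2) // l.length ≤ r}) (x : Fin 2)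
    (hx : b.1 = a.1 ++ [x]) : (GT r 2).Adj (Sum.inl a) (Sum.inl b) := by
  refine (SimpleGraph.fromRel_adj _ _ _).mpr ?_
  refine ⟨?_, Or.inr ⟨x, hx⟩⟩
  intro hc
  obtain rfl : a = b := Sum.inl.inj hc
  simpa using congrArg List.length hx

lemma adj_up (a b : {l : List (Fin 2) // l.length < r}) (x : Fin 2)
    (hx : a.1 = b.1 ++ [x]) :
    (GT r 2).Adj (Sum.inr a : GTVert r 2) (Sum.inr b) := by
  refine (SimpleGraph.fromRel_adj _ _ _).mpr ?_
  refine ⟨?_, Or.inl ⟨x, hx⟩⟩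
  intro hc
  obtain rfl : a = b := Sum.inr.inj hc
  simpa using congrArg List.length hx

lemma adj_glue (a : {l : List (Fin 2) // l.length ≤ r}) (ha : a.1.length = r)
    (b : {l : List (Fin 2) // l.length < r}) (x : Fin 2) (hx : a.1 = b.1 ++ [x]) :
    (GT r 2).Adj (Sum.inl a) (Sum.inr b : GTVert r 2) := by
  refine (SimpleGraph.fromRel_adj _ _ _).mpr ?_
  exact ⟨(by intro hc; cases hc), Or.inl ⟨ha, x, hx⟩⟩

lemma exists_walk : ∀ (s l : List (Fin 2)) (hl : l.length < r)
    (hla : (l ++ s).length = r),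
    ∃ p : (GT r 2).Walk (Sum.inl ⟨l, hl.le⟩) (Sum.inr ⟨l, hl⟩),
      p.length = 2 * (r - l.length) ∧
      (Sum.inl ⟨l ++ s, hla.le⟩ : GTVert r 2) ∈ p.support := by
  intro s
  induction s with
  | nil =>
    intro l hl hla
    simp at hla
    omega
  | cons x s ih =>
    intro l hl hla
    have hlen : l.length + 1 + s.length = r := by have := hla; simp at this; omega
    by_cases hc : (l ++ [x]).length < r
    · have hla2 : ((l ++ [x]) ++ s).length = r := by simp; omega
      obtain ⟨p, hp1, hp2⟩ := ih (l ++ [x]) hc hla2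
      refine ⟨SimpleGraph.Walk.cons (adj_down ⟨l, hl.le⟩ ⟨l ++ [x], hc.le⟩ x rfl)
        (p.append (SimpleGraph.Walk.cons (adj_up ⟨l ++ [x], hc⟩ ⟨l, hl⟩ x rfl)
          SimpleGraph.Walk.nil)), ?_, ?_⟩
      · show (p.append _).length + 1 = _
        refine (congrArg (· + 1) (SimpleGraph.Walk.length_append _ _)).trans ?_
        show p.length + (0 + 1) + 1 = _
        rw [hp1]
        simp only [List.length_append, List.length_singleton] at hc ⊢
        omega
      · have hv : (⟨l ++ x :: s, hla.le⟩ : {l : List (Fin 2) // l.length ≤ r}) =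
            ⟨(l ++ [x]) ++ s, hla2.le⟩ := Subtype.ext (by simp)
        rw [hv]
        exact List.mem_cons_of_mem _ ((SimpleGraph.Walk.mem_support_append_iff _ _).mpr (Or.inl hp2))
    · have hs : s = [] := by
        simp only [List.length_append, List.length_singleton] at hc
        have : s.length = 0 := by omega
        exact List.length_eq_zero_iff.mp this
      subst hs
      have hr' : (l ++ [x]).length = r := by simp at hlen ⊢; omega
      refine ⟨SimpleGraph.Walk.cons (adj_down ⟨l, hl.le⟩ ⟨l ++ [x], hr'.le⟩ x rfl)
        (SimpleGraph.Walk.cons (adj_glue ⟨l ++ [x], hr'.le⟩ hr' ⟨l, hl⟩ x rfl)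
          SimpleGraph.Walk.nil), ?_, ?_⟩
      · show 0 + 1 + 1 = _
        simp only [List.length_append, List.length_singleton] at hr'
        omega
      · exact List.mem_cons_of_mem _ (List.mem_cons.mpr (Or.inl rfl))

lemma asc_of_append {u m v : GTVert r 2} (p₁ : (GT r 2).Walk u m)
    (p₂ : (GT r 2).Walk m v) (h : Asc (p₁.append p₂)) : Asc p₁ ∧ Asc p₂ := by
  have l1 := length_ge p₁
  have l2 := length_ge p₂
  simp only [Asc, SimpleGraph.Walk.length_append] at h ⊢
  push_cast at h ⊢
  omega

lemma desc_reverse {u v : GTVert r 2} (p : (GT r 2).Walk u v) (h : Asc p) :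
    Desc p.reverse := by
  simpa [Desc, Asc, SimpleGraph.Walk.length_reverse] using h

instance {r t : ℕ} : DecidableEq (GTVert r t) :=
  inferInstanceAs (DecidableEq (_ ⊕ _))

end GTX

/-- A geodesic: a path realizing the distance between its endpoints. -/
def IsGeodesic {V : Type*} (G : SimpleGraph V) {u v : V} (p : G.Walk u v) : Prop :=
  p.IsPath ∧ p.length = G.dist u v

open GTX

/-- For a non-quasi-leaf vertex of the first copy of `GT(r)` and the
corresponding vertex of the second copy, and any quasi-leaf descending from
them, there is a unique geodesic between the two corresponding vertices
passing through that quasi-leaf; moreover their distance is `2 (r - depth)`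
(with `depth = i - 1`, this is `2 (r - i + 1)`). -/
theorem GT_corresponding_vertices_geodesic (r : ℕ) (hr : 1 ≤ r)
    (l : List (Fin 2)) (hl : l.length < r) (la : List (Fin 2)) (hla : la.length ≤ r)
    (hleaf : la.length = r) (hdesc : l <+: la) :
    (GT r 2).dist (Sum.inl ⟨l, le_of_lt hl⟩) (Sum.inr ⟨l, hl⟩) = 2 * (r - l.length) ∧
    ∃! p : (GT r 2).Walk (Sum.inl ⟨l, le_of_lt hl⟩) (Sum.inr ⟨l, hl⟩),
      IsGeodesic (GT r 2) p ∧ (Sum.inl ⟨la, hla⟩ : GTVert r 2) ∈ p.support := by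
  obtain ⟨s, rfl⟩ := hdesc
  obtain ⟨w0, hw1, hw2⟩ := exists_walk s l hl hleaf
  have hw2' : (Sum.inl ⟨l ++ s, hla⟩ : GTVert r 2) ∈ w0.support := hw2
  have c1 : ((2 * (r - l.length) : ℕ) : ℤ) =
      f (Sum.inr ⟨l, hl⟩ : GTVert r 2) - f (Sum.inl ⟨l, le_of_lt hl⟩ : GTVert r 2) := by
    rw [Nat.cast_mul, Nat.cast_sub hl.le]
    simp only [f]
    push_cast
    ring
  have hle : (GT r 2).dist (Sum.inl ⟨l, le_of_lt hl⟩) (Sum.inr ⟨l, hl⟩) ≤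
      2 * (r - l.length) := hw1 ▸ SimpleGraph.dist_le w0
  obtain ⟨p0, hp0⟩ := w0.reachable.exists_walk_length_eq_dist
  have hge := (length_ge p0).1
  have hdist : (GT r 2).dist (Sum.inl ⟨l, le_of_lt hl⟩) (Sum.inr ⟨l, hl⟩) =
      2 * (r - l.length) := by
    rw [← c1, hp0] at hge
    omega
  have hasc : Asc w0 := by
    exact (congrArg (Nat.cast : ℕ → ℤ) hw1).trans c1
  have hfm : (r : ℤ) ≤ f (Sum.inl ⟨l ++ s, hla⟩ : GTVert r 2) := by
    simp only [f_inl, hleaf]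
    exact le_rfl
  refine ⟨hdist, w0, ⟨⟨asc_isPath w0 hasc, hw1.trans hdist.symm⟩, hw2'⟩, ?_⟩
  rintro p ⟨⟨hpath, hplen⟩, hmem⟩
  have hascp : Asc p := by
    exact (congrArg (Nat.cast : ℕ → ℤ) (hplen.trans hdist)).trans c1
  obtain ⟨ha1, ha2⟩ := asc_of_append _ _ ((p.take_spec hmem).symm ▸ hascp)
  obtain ⟨hb1, hb2⟩ := asc_of_append _ _ ((w0.take_spec hw2').symm ▸ hasc)
  have et : p.takeUntil _ hmem = w0.takeUntil _ hw2' := by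
    have h1 := desc_reverse _ ha1
    have h10 := desc_reverse _ hb1
    have heq := desc_unique ((p.takeUntil _ hmem).reverse.length) _
      ⟨⟨l ++ s, hla⟩, rfl⟩ (p.takeUntil _ hmem).reverse (w0.takeUntil _ hw2').reverse
      rfl h1 h10
    have := congrArg SimpleGraph.Walk.reverse heq
    exact (SimpleGraph.Walk.reverse_reverse _).symm.trans (this.trans (SimpleGraph.Walk.reverse_reverse _))
  have ed : p.dropUntil _ hmem = w0.dropUntil _ hw2' :=
    asc_unique ((p.dropUntil _ hmem).length) _ hfm _ _ rfl ha2 hb2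
  rw [← p.take_spec hmem, ← w0.take_spec hw2', et, ed]
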